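/- The lower bound J_P = J_W is achieved: for the three-element distributions x = (0, 1-p, p) and y = (p, 1-p, 0) with 0 < p < 1, J_P(x,y) = (1-p)/(1+p) = J_W(x,y). -/

import Mathlib

open Finset

open Classical in
/-- The probability Jaccard similarity of two nonnegative vectors. -/
noncomputable def JP {ι : Type*} [Fintype ι] (x y : ι → ℝ) : ℝ :=
  ∑ i ∈ Finset.univ.filter (fun i => 0 < x i ∧ 0 < y i),
    (∑ j, max (x j / x i) (y j / y i))⁻¹

/-- The lower bound `J_P = J_W` is achieved by `x = (0, 1-p, p)`, `y = (p, 1-p, 0)`. -/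
theorem JP_lower_bound_achieved (p : ℝ) (hp0 : 0 < p) (hp1 : p < 1) :
    JP ![0, 1 - p, p] ![p, 1 - p, 0] = (1 - p) / (1 + p) ∧
    (∑ i, min (![0, 1 - p, p] i) (![p, 1 - p, 0] i)) /
      (∑ i, max (![0, 1 - p, p] i) (![p, 1 - p, 0] i)) = (1 - p) / (1 + p) := by
  have h1 : (0:ℝ) < 1 - p := by linarith
  constructor
  · rw [JP, Finset.sum_filter, Fin.sum_univ_three]
    simp only [Matrix.cons_val_zero, Matrix.cons_val_one, Matrix.head_cons,
      Matrix.cons_val_two, Matrix.tail_cons, Fin.sum_univ_three,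
      lt_self_iff_false, false_and, and_false, if_false]
    have hle : (0:ℝ)/(1-p) ≤ p/(1-p) := by rw [zero_div]; positivity
    rw [if_pos ⟨h1, h1⟩, max_eq_right hle, max_self, max_eq_left hle,
      div_self h1.ne', show p/(1-p) + 1 + p/(1-p) = (1+p)/(1-p) from by
      field_simp; ring, inv_div]
    ring
  · rw [Fin.sum_univ_three, Fin.sum_univ_three]
    simp only [Matrix.cons_val_zero, Matrix.cons_val_one, Matrix.head_cons,
      Matrix.cons_val_two, Matrix.tail_cons]
    rw [min_eq_left hp0.le, min_self, min_eq_right hp0.le,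
      max_eq_right hp0.le, max_self, max_eq_left hp0.le]
    ring_nf
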